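/- In the on module policy (rules r0–r13), each full pass of the outer loop strictly decreases the lexicographic measure (|N|, total number of blocks above blocks in X ∪ Y), where N is the set of non-clear blocks among X ∪ Y: each execution of Unstack(r1, B) followed by Putdown(r1) (rules r9, r10) removes the topmost block of a tower above a block in X ∪ Y and places it on the table, strictly decreasing the number of blocks above X ∪ Y; hence the policy clears X ∪ Y in finitely many steps. -/

import Mathlib

/-- Location of a block: on another block, on the table, or held by the gripper. -/
inductive Loc (Block : Type) where
  | on (b : Block)
  | table
  | held
deriving DecidableEq

/-- A Blocksworld state: the location of every block. -/
structure BWState (Block : Type) where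
  loc : Block → Loc Block

variable {Block : Type} [DecidableEq Block]

/-- A block is clear: no block is on it and it is not held. -/
def Clear (s : BWState Block) (b : Block) : Prop :=
  (∀ z : Block, s.loc z ≠ Loc.on b) ∧ s.loc b ≠ Loc.held

def GripperEmpty (s : BWState Block) : Prop := ∀ z : Block, s.loc z ≠ Loc.held

def UnstackStep (s s' : BWState Block) (z w : Block) : Prop :=
  Clear s z ∧ s.loc z = Loc.on w ∧ GripperEmpty s ∧
  s'.loc = Function.update s.loc z Loc.held

def PutdownStep (s s' : BWState Block) (z : Block) : Prop :=
  s.loc z = Loc.held ∧ s'.loc = Function.update s.loc z Loc.table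

/-- `z` is (transitively) above `b` in state `s`. -/
def Above (s : BWState Block) (z b : Block) : Prop :=
  Relation.TransGen (fun a c : Block => s.loc a = Loc.on c) z b

/-- The concept N: blocks among X ∪ Y = {x, y} that are not clear. -/
def NSet (s : BWState Block) (x y : Block) : Set Block :=
  {b | (b = x ∨ b = y) ∧ ¬ Clear s b}

/-- The number of blocks (transitively) above `x` or above `y`. -/
noncomputable def aboveCount (s : BWState Block) (x y : Block) : ℕ :=
  {z : Block | Above s z x ∨ Above s z y}.ncard

/-- One full pass of the outer loop of the `on` module (rules r9, r10): the
topmost block `z` of a tower above a block in X ∪ Y is unstacked from `w` and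
put down on the table. -/
def Pass (x y : Block) (s s2 : BWState Block) : Prop :=
  ∃ (z w : Block) (s1 : BWState Block),
    (Above s z x ∨ Above s z y) ∧ z ≠ x ∧ z ≠ y ∧
    UnstackStep s s1 z w ∧ PutdownStep s1 s2 z

private lemma above_head {s : BWState Block} {z b : Block} (h : Above s z b) :
    ∃ c, s.loc z = Loc.on c := by
  induction h with
  | single h1 => exact ⟨_, h1⟩
  | tail _ _ ih => exact ih

private lemma pass_loc {s s2 : BWState Block} {x y : Block} (h : Pass x y s s2) :
    ∃ z : Block, (Above s z x ∨ Above s z y) ∧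
      s2.loc = Function.update s.loc z Loc.table := by
  obtain ⟨z, w, s1, hab, _, _, ⟨_, _, _, h1⟩, ⟨_, h2⟩⟩ := h
  refine ⟨z, hab, ?_⟩
  rw [h2, h1, Function.update_idem]

theorem pass_decreases {s s2 : BWState Block} {x y : Block} (h : Pass x y s s2) :
    {z : Block | Above s2 z x ∨ Above s2 z y} ⊂
      {z : Block | Above s z x ∨ Above s z y} ∧ NSet s2 x y ⊆ NSet s x y := by
  obtain ⟨z, hab, hloc⟩ := pass_loc h
  have hz2 : s2.loc z = Loc.table := by rw [hloc]; simp
  have hstep : ∀ a c : Block, s2.loc a = Loc.on c → s.loc a = Loc.on c := by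
    intro a c hac
    have haz : a ≠ z := by rintro rfl; rw [hz2] at hac; cases hac
    rwa [hloc, Function.update_of_ne haz] at hac
  have habove : ∀ a b : Block, Above s2 a b → Above s a b := by
    intro a b hab
    exact Relation.TransGen.mono hstep _ _ hab
  constructor
  · constructor
    · intro a ha
      exact ha.imp (habove a x) (habove a y)
    · intro hsub
      have hz : z ∈ {u : Block | Above s2 u x ∨ Above s2 u y} := hsub hab
      rcases hz with hz | hz <;>
      · obtain ⟨c, hc⟩ := above_head hz
        rw [hz2] at hc; cases hc
  · intro b hb
    refine ⟨hb.1, fun hcl => hb.2 ⟨fun a ha => ?_, ?_⟩⟩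
    · exact hcl.1 a (hstep a b ha)
    · rw [hloc]
      rcases eq_or_ne b z with rfl | hbz
      · simp
      · rw [Function.update_of_ne hbz]; exact hcl.2

/-- in the `on` module policy, each full pass of the outer loop —
`Unstack(r1, B)` followed by `Putdown(r1)`, removing the topmost block of a
tower above a block in X ∪ Y = {x, y} and placing it on the table — strictly
decreases the number of blocks above X ∪ Y, hence strictly decreases the
lexicographic measure (|N|, number of blocks above X ∪ Y), where N is the set of
non-clear blocks among X ∪ Y; consequently there is no infinite sequence of such
passes and the policy clears X ∪ Y in finitely many steps. -/
theorem stmt15 [Fintype Block] (x y : Block) (hxy : x ≠ y) :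
    (∀ s s2 : BWState Block, Pass x y s s2 →
      aboveCount s2 x y < aboveCount s x y ∧
      Prod.Lex (· < ·) (· < ·)
        ((NSet s2 x y).ncard, aboveCount s2 x y)
        ((NSet s x y).ncard, aboveCount s x y)) ∧
    ¬ ∃ g : ℕ → BWState Block, ∀ i : ℕ, Pass x y (g i) (g (i + 1)) := by
  have main : ∀ s s2 : BWState Block, Pass x y s s2 →
      aboveCount s2 x y < aboveCount s x y ∧
      Prod.Lex (· < ·) (· < ·)
        ((NSet s2 x y).ncard, aboveCount s2 x y)
        ((NSet s x y).ncard, aboveCount s x y) := by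
    intro s s2 h
    obtain ⟨hss, hN⟩ := pass_decreases h
    have hcount : aboveCount s2 x y < aboveCount s x y :=
      Set.ncard_lt_ncard hss (Set.toFinite _)
    refine ⟨hcount, ?_⟩
    have hNle : (NSet s2 x y).ncard ≤ (NSet s x y).ncard :=
      Set.ncard_le_ncard hN (Set.toFinite _)
    rcases lt_or_eq_of_le hNle with hlt | heq
    · exact Prod.Lex.left _ _ hlt
    · rw [heq]; exact Prod.Lex.right _ hcount
  refine ⟨main, ?_⟩
  rintro ⟨g, hg⟩
  have hdec : ∀ i, aboveCount (g (i + 1)) x y < aboveCount (g i) x y :=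
    fun i => (main _ _ (hg i)).1
  have hle : ∀ n, aboveCount (g n) x y + n ≤ aboveCount (g 0) x y := by
    intro n
    induction n with
    | zero => simp
    | succ k ih => have := hdec k; omega
  have := hle (aboveCount (g 0) x y + 1)
  omega
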